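/- Consider the biochemical control circuit x₁' = g(xₙ) - α₁x₁, xᵢ' = x_{i-1} - αᵢxᵢ for i = 2,…,n, with g(u) = (1+u)/(k+u), k > 1, αᵢ > 0, and let α = ∏αᵢ. If k - 1 < αk², then there exists ε > 0 such that the scaled L¹ matrix measure μ_{1,D_ε}(J(x)) ≤ -ε/2 < 0 for all x ∈ ℝⁿ₊, where D_ε = diag(1, α₁-ε, (α₁-ε)(α₂-ε), …, ∏_{i=1}^{n-1}(αᵢ-ε)); hence the system is contractive on ℝⁿ₊ with respect to the norm |z| = |D_ε z|₁. -/

import Mathlib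

open Finset

/-- The index `n-1` (the last coordinate) in `Fin n`. -/
def lastIdx (n : ℕ) (hn : 0 < n) : Fin n := ⟨n - 1, by omega⟩

/-- The nonlinearity `g(u) = (1+u)/(k+u)`. -/
noncomputable def gfun (k u : ℝ) : ℝ := (1 + u) / (k + u)

/-- The vector field of the biochemical control circuit:
`F₁ = g(xₙ) - α₁x₁`, `Fᵢ = x_{i-1} - αᵢxᵢ` for `i ≥ 2`. -/
noncomputable def Ffield (n : ℕ) (hn : 0 < n) (k : ℝ) (α : Fin n → ℝ)
    (x : Fin n → ℝ) : Fin n → ℝ := fun i =>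
  if (i : ℕ) = 0 then gfun k (x (lastIdx n hn)) - α i * x i
  else x ⟨(i : ℕ) - 1, by have := i.isLt; omega⟩ - α i * x i

/-- The Jacobian of the circuit: diagonal `-αᵢ`, subdiagonal `1`,
top-right entry `g'(xₙ) = (k-1)/(k+xₙ)²`. -/
noncomputable def Jmat (n : ℕ) (hn : 0 < n) (k : ℝ) (α : Fin n → ℝ)
    (x : Fin n → ℝ) : Matrix (Fin n) (Fin n) ℝ := fun i j =>
  if i = j then -α i
  else if (i : ℕ) = (j : ℕ) + 1 then 1
  else if (i : ℕ) = 0 ∧ j = lastIdx n hn then (k - 1) / (k + x (lastIdx n hn)) ^ 2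
  else 0

/-- The `L¹` matrix measure: `μ₁(A) = max_j (A_jj + ∑_{i≠j} |A_ij|)`. -/
noncomputable def mu1 {n : ℕ} (A : Matrix (Fin n) (Fin n) ℝ) : ℝ :=
  ⨆ j, (A j j + ∑ i ∈ Finset.univ.erase j, |A i j|)

/-- The scaling matrix `D_ε = diag(1, α₁-ε, (α₁-ε)(α₂-ε), …, ∏_{i<n-1}(αᵢ-ε))`. -/
noncomputable def Dmat (n : ℕ) (α : Fin n → ℝ) (ε : ℝ) : Matrix (Fin n) (Fin n) ℝ :=
  Matrix.diagonal fun i => ∏ j ∈ Finset.Iio i, (α j - ε)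

open Topology Filter

/-- Generic circuit matrix with top-right entry `β`. -/
noncomputable def Amat (n : ℕ) (hn : 0 < n) (α : Fin n → ℝ) (β : ℝ) :
    Matrix (Fin n) (Fin n) ℝ := fun i j =>
  if i = j then -α i
  else if (i : ℕ) = (j : ℕ) + 1 then 1
  else if (i : ℕ) = 0 ∧ j = lastIdx n hn then β
  else 0

lemma Jmat_eq_Amat (n : ℕ) (hn : 0 < n) (k : ℝ) (α : Fin n → ℝ) (x : Fin n → ℝ) :
    Jmat n hn k α x = Amat n hn α ((k - 1) / (k + x (lastIdx n hn)) ^ 2) := rfl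

lemma dpos {n : ℕ} (α : Fin n → ℝ) {ε : ℝ} (hεα : ∀ i, ε < α i) (i : Fin n) :
    0 < ∏ j ∈ Finset.Iio i, (α j - ε) :=
  Finset.prod_pos fun j _ => by have := hεα j; linarith

lemma Dinv {n : ℕ} (α : Fin n → ℝ) {ε : ℝ} (hεα : ∀ i, ε < α i) :
    (Dmat n α ε)⁻¹ = Matrix.diagonal (fun i => (∏ j ∈ Finset.Iio i, (α j - ε))⁻¹) := by
  apply Matrix.inv_eq_right_inv
  rw [Dmat, Matrix.diagonal_mul_diagonal]
  convert Matrix.diagonal_one with i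
  exact mul_inv_cancel₀ (ne_of_gt (dpos α hεα i))

lemma Bentry {n : ℕ} (hn : 0 < n) (α : Fin n → ℝ) {ε : ℝ} (hεα : ∀ i, ε < α i) (β : ℝ) (i j : Fin n) :
    (Dmat n α ε * Amat n hn α β * (Dmat n α ε)⁻¹) i j =
      (∏ l ∈ Finset.Iio i, (α l - ε)) * Amat n hn α β i j *
        (∏ l ∈ Finset.Iio j, (α l - ε))⁻¹ := by
  rw [Dinv α hεα, Matrix.mul_diagonal, Dmat, Matrix.diagonal_mul]

lemma mu1_bound (n : ℕ) (hn : 2 ≤ n) (α : Fin n → ℝ) (ε β : ℝ) (hε : 0 < ε)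
    (hεα : ∀ i, ε < α i) (hβ0 : 0 ≤ β)
    (hβ : β ≤ (α (lastIdx n (Nat.zero_lt_of_lt hn)) - ε / 2) *
      ∏ j ∈ Finset.Iio (lastIdx n (Nat.zero_lt_of_lt hn)), (α j - ε)) :
    mu1 (Dmat n α ε * Amat n (Nat.zero_lt_of_lt hn) α β * (Dmat n α ε)⁻¹) ≤ -ε / 2 := by
  have hn0 : 0 < n := by omega
  haveI : NeZero n := ⟨by omega⟩
  set L : Fin n := lastIdx n hn0 with hL
  have hLval : (L : ℕ) = n - 1 := rfl
  have hdpos : ∀ i : Fin n, 0 < ∏ l ∈ Finset.Iio i, (α l - ε) := dpos α hεα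
  apply ciSup_le
  intro j
  simp only [Bentry hn0 α hεα β]
  have hdiag : Amat n hn0 α β j j = -α j := by simp [Amat]
  have hdj : (∏ l ∈ Finset.Iio j, (α l - ε)) * Amat n hn0 α β j j *
      (∏ l ∈ Finset.Iio j, (α l - ε))⁻¹ = -α j := by
    rw [hdiag, mul_comm (∏ l ∈ Finset.Iio j, (α l - ε)), mul_assoc,
      mul_inv_cancel₀ (ne_of_gt (hdpos j)), mul_one]
  rw [hdj]
  by_cases hjL : j = L
  · subst hjL
    have h0L : (0 : Fin n) ≠ L := by
      intro h
      have : (0 : ℕ) = n - 1 := congrArg Fin.val h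
      omega
    have hmem : (0 : Fin n) ∈ Finset.univ.erase L := Finset.mem_erase.2 ⟨h0L, Finset.mem_univ _⟩
    rw [Finset.sum_eq_single_of_mem (0 : Fin n) hmem ?_]
    · have hA0L : Amat n hn0 α β 0 L = β := by
        have h1 : ¬ ((0 : Fin n) : ℕ) = (L : ℕ) + 1 := by
          simp only [Fin.val_zero, hLval]; omega
        simp [Amat, h0L, h1, ← hL]
      have hd0 : (∏ l ∈ Finset.Iio (0 : Fin n), (α l - ε)) = 1 := by
        have h : Finset.Iio (0 : Fin n) = ∅ := by
          ext x; simp [Fin.le_def, Fin.lt_def]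
        rw [h, Finset.prod_empty]
      rw [hA0L, hd0, one_mul, abs_of_nonneg (mul_nonneg hβ0 (le_of_lt (inv_pos.2 (hdpos L))))]
      have hdL := hdpos L
      have : β * (∏ l ∈ Finset.Iio L, (α l - ε))⁻¹ ≤ α L - ε / 2 := by
        rw [← div_eq_mul_inv, div_le_iff₀ hdL]
        exact hβ
      linarith
    · intro b hb hb0
      have hbL : b ≠ L := (Finset.mem_erase.1 hb).1
      have hb1 : ¬ ((b : ℕ) = (L : ℕ) + 1) := by
        intro h; rw [hLval] at h; have := b.isLt; omega
      have hbv : ¬ ((b : ℕ) = 0) := by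
        intro h; exact hb0 (Fin.ext h)
      simp [Amat, hbL, hb1, hbv]
  · have hjlt : (j : ℕ) < n - 1 := by
      have := j.isLt
      rcases Nat.lt_or_ge (j : ℕ) (n - 1) with h | h
      · exact h
      · exact absurd (Fin.ext (by omega : (j : ℕ) = (L : ℕ))) hjL
    set j1 : Fin n := ⟨(j : ℕ) + 1, by omega⟩ with hj1
    have hj1j : j1 ≠ j := by
      intro h; have := congrArg Fin.val h; simp [hj1] at this
    have hmem : j1 ∈ Finset.univ.erase j := Finset.mem_erase.2 ⟨hj1j, Finset.mem_univ _⟩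
    rw [Finset.sum_eq_single_of_mem j1 hmem ?_]
    · have hAj1 : Amat n hn0 α β j1 j = 1 := by
        simp [Amat, hj1j, show ((j1 : ℕ)) = (j : ℕ) + 1 from rfl]
      have hdj1 : (∏ l ∈ Finset.Iio j1, (α l - ε)) = (α j - ε) * ∏ l ∈ Finset.Iio j, (α l - ε) := by
        have hins : Finset.Iio j1 = insert j (Finset.Iio j) := by
          ext x
          simp only [Finset.mem_Iio, Finset.mem_insert, Fin.lt_def, Fin.ext_iff, hj1]
          omega
        rw [hins, Finset.prod_insert (by simp)]
      rw [hAj1, hdj1, mul_one]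
      have hdj' := hdpos j
      have hαε := hεα j
      rw [mul_assoc, mul_inv_cancel₀ (ne_of_gt hdj'), mul_one, abs_of_pos (by linarith)]
      linarith
    · intro b hb hbj1
      have hbj : b ≠ j := (Finset.mem_erase.1 hb).1
      have hb1 : ¬ ((b : ℕ) = (j : ℕ) + 1) := by
        intro h; exact hbj1 (Fin.ext h)
      have hjL' : ¬ ((b : ℕ) = 0 ∧ j = L) := fun h => hjL h.2
      simp [Amat, hbj, hb1, hjL', ← hL, hjL]

lemma col_le_mu1 {n : ℕ} [NeZero n] (B : Matrix (Fin n) (Fin n) ℝ) (j : Fin n) :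
    B j j + ∑ i ∈ Finset.univ.erase j, |B i j| ≤ mu1 B := by
  unfold mu1
  exact le_ciSup (f := fun j => B j j + ∑ i ∈ Finset.univ.erase j, |B i j|)
    (Set.Finite.bddAbove (Set.finite_range _)) j

lemma sum_abs_step {n : ℕ} [NeZero n] (B : Matrix (Fin n) (Fin n) ℝ) (w : Fin n → ℝ) {h : ℝ}
    (hh : 0 ≤ h) (hB : ∀ j, -1 ≤ h * B j j) :
    ∑ i, |w i + h * B.mulVec w i| ≤ (1 + h * mu1 B) * ∑ i, |w i| := by
  calc ∑ i, |w i + h * B.mulVec w i|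
      = ∑ i, |∑ j, ((if i = j then (1:ℝ) else 0) + h * B i j) * w j| := by
        apply Finset.sum_congr rfl
        intro i _
        congr 1
        simp only [add_mul, Finset.sum_add_distrib, ite_mul, one_mul, zero_mul,
          Finset.sum_ite_eq, Finset.mem_univ, if_true]
        rw [Matrix.mulVec, dotProduct, Finset.mul_sum]
        congr 1
        apply Finset.sum_congr rfl
        intro j _
        ring
    _ ≤ ∑ i, ∑ j, |(if i = j then (1:ℝ) else 0) + h * B i j| * |w j| := by
        apply Finset.sum_le_sum
        intro i _
        refine (Finset.abs_sum_le_sum_abs _ _).trans ?_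
        apply Finset.sum_le_sum
        intro j _
        rw [abs_mul]
    _ = ∑ j, (∑ i, |(if i = j then (1:ℝ) else 0) + h * B i j|) * |w j| := by
        rw [Finset.sum_comm]
        simp [Finset.sum_mul]
    _ ≤ ∑ j, (1 + h * mu1 B) * |w j| := by
        apply Finset.sum_le_sum
        intro j _
        apply mul_le_mul_of_nonneg_right _ (abs_nonneg _)
        have hsplit : ∑ i, |(if i = j then (1:ℝ) else 0) + h * B i j|
            = |1 + h * B j j| + ∑ i ∈ Finset.univ.erase j, |(if i = j then (1:ℝ) else 0) + h * B i j| := by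
          rw [← Finset.add_sum_erase _ _ (Finset.mem_univ j)]
          simp
        rw [hsplit]
        have h1 : |1 + h * B j j| = 1 + h * B j j := abs_of_nonneg (by have := hB j; linarith)
        have h2 : ∑ i ∈ Finset.univ.erase j, |(if i = j then (1:ℝ) else 0) + h * B i j|
            = h * ∑ i ∈ Finset.univ.erase j, |B i j| := by
          rw [Finset.mul_sum]
          apply Finset.sum_congr rfl
          intro i hi
          rw [if_neg (Finset.mem_erase.1 hi).1, zero_add, abs_mul, abs_of_nonneg hh]
        rw [h1, h2]
        have := col_le_mu1 B j
        nlinarith [this, hh]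
    _ = (1 + h * mu1 B) * ∑ j, |w j| := by rw [← Finset.mul_sum]

lemma gfun_sub {k : ℝ} (hk : 1 < k) {p q : ℝ} (hp : 0 ≤ p) (hq : 0 ≤ q) :
    gfun k p - gfun k q = (k - 1) / ((k + p) * (k + q)) * (p - q) := by
  have h1 : (0:ℝ) < k + p := by linarith
  have h2 : (0:ℝ) < k + q := by linarith
  unfold gfun
  field_simp
  ring

lemma gratio_bounds {k : ℝ} (hk : 1 < k) {p q : ℝ} (hp : 0 ≤ p) (hq : 0 ≤ q) :
    0 ≤ (k - 1) / ((k + p) * (k + q)) ∧ (k - 1) / ((k + p) * (k + q)) ≤ (k - 1) / k ^ 2 := by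
  have h1 : (0:ℝ) < k + p := by linarith
  have h2 : (0:ℝ) < k + q := by linarith
  constructor
  · exact div_nonneg (by linarith) (by positivity)
  · apply div_le_div_of_nonneg_left (by linarith) (by positivity)
    nlinarith

lemma Ffield_sub (n : ℕ) (hn : 2 ≤ n) (k : ℝ) (hk : 1 < k) (α : Fin n → ℝ)
    (p q : Fin n → ℝ) (hp : ∀ i, 0 ≤ p i) (hq : ∀ i, 0 ≤ q i) :
    ∃ β : ℝ, 0 ≤ β ∧ β ≤ (k - 1) / k ^ 2 ∧
      Ffield n (Nat.zero_lt_of_lt hn) k α p - Ffield n (Nat.zero_lt_of_lt hn) k α q =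
        (Amat n (Nat.zero_lt_of_lt hn) α β).mulVec (p - q) := by
  have hn0 : 0 < n := by omega
  set L : Fin n := lastIdx n hn0 with hL
  have hLval : (L : ℕ) = n - 1 := rfl
  obtain ⟨hβ0, hβ1⟩ := gratio_bounds hk (hp L) (hq L)
  refine ⟨(k - 1) / ((k + p L) * (k + q L)), hβ0, hβ1, ?_⟩
  set β := (k - 1) / ((k + p L) * (k + q L)) with hβ
  funext i
  rw [Pi.sub_apply, Matrix.mulVec, dotProduct]
  by_cases hi0 : (i : ℕ) = 0
  · have hiL : i ≠ L := by
      intro h; rw [h] at hi0; rw [hLval] at hi0; omega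
    have hsum : ∑ j, Amat n hn0 α β i j * (p - q) j
        = ∑ j ∈ ({i, L} : Finset (Fin n)), Amat n hn0 α β i j * (p - q) j := by
      symm
      apply Finset.sum_subset (Finset.subset_univ _)
      intro b _ hb
      simp only [Finset.mem_insert, Finset.mem_singleton, not_or] at hb
      have h1 : i ≠ b := fun h => hb.1 h.symm
      have h2 : ¬ ((i : ℕ) = (b : ℕ) + 1) := by rw [hi0]; omega
      have h3 : ¬ ((i : ℕ) = 0 ∧ b = L) := fun h => hb.2 h.2
      simp [Amat, h1, h2, h3, ← hL]
    rw [hsum, Finset.sum_pair hiL]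
    have hAii : Amat n hn0 α β i i = -α i := by simp [Amat]
    have hAiL : Amat n hn0 α β i L = β := by
      have h2 : ¬ ((i : ℕ) = (L : ℕ) + 1) := by
        rw [hi0, hLval]; omega
      simp [Amat, hiL, h2, hi0, ← hL]
    rw [hAii, hAiL]
    have hFp : ∀ v : Fin n → ℝ, Ffield n hn0 k α v i = gfun k (v L) - α i * v i := by
      intro v
      simp [Ffield, hi0, hL]
    simp only [hFp, Pi.sub_apply]
    have hg := gfun_sub hk (hp L) (hq L)
    linear_combination hg
  · set im1 : Fin n := ⟨(i : ℕ) - 1, by have := i.isLt; omega⟩ with him1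
    have him1v : (im1 : ℕ) = (i : ℕ) - 1 := rfl
    have hine : i ≠ im1 := by
      intro h
      have := congrArg Fin.val h
      rw [him1v] at this
      omega
    have hsum : ∑ j, Amat n hn0 α β i j * (p - q) j
        = ∑ j ∈ ({i, im1} : Finset (Fin n)), Amat n hn0 α β i j * (p - q) j := by
      symm
      apply Finset.sum_subset (Finset.subset_univ _)
      intro b _ hb
      simp only [Finset.mem_insert, Finset.mem_singleton, not_or] at hb
      have h1 : i ≠ b := fun h => hb.1 h.symm
      have h2 : ¬ ((i : ℕ) = (b : ℕ) + 1) := by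
        intro h
        exact hb.2 (Fin.ext (by rw [him1v]; omega))
      have h3 : ¬ ((i : ℕ) = 0 ∧ b = L) := fun h => hi0 h.1
      simp [Amat, h1, h2, h3, hi0]
    rw [hsum, Finset.sum_pair hine]
    have hAii : Amat n hn0 α β i i = -α i := by simp [Amat]
    have hAim1 : Amat n hn0 α β i im1 = 1 := by
      have h2 : (i : ℕ) = (im1 : ℕ) + 1 := by rw [him1v]; omega
      unfold Amat
      rw [if_neg hine, if_pos h2]
    rw [hAii, hAim1]
    have hFp : ∀ v : Fin n → ℝ, Ffield n hn0 k α v i = v im1 - α i * v i := by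
      intro v
      simp [Ffield, hi0, him1]
    simp only [hFp, Pi.sub_apply]
    ring

lemma eps_exists (n : ℕ) (hn : 2 ≤ n) (k : ℝ) (hk : 1 < k) (α : Fin n → ℝ)
    (hα : ∀ i, 0 < α i) (hcond : k - 1 < (∏ i, α i) * k ^ 2) :
    ∃ ε : ℝ, 0 < ε ∧ (∀ i, ε < α i) ∧
      (k - 1) / k ^ 2 ≤ (α (lastIdx n (Nat.zero_lt_of_lt hn)) - ε / 2) *
        ∏ j ∈ Finset.Iio (lastIdx n (Nat.zero_lt_of_lt hn)), (α j - ε) := by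
  have hn0 : 0 < n := by omega
  set L : Fin n := lastIdx n hn0 with hL
  have hk2 : (0:ℝ) < k ^ 2 := by positivity
  have hc0 : (k - 1) / k ^ 2 < ∏ i, α i := by
    rw [div_lt_iff₀ hk2]; exact hcond
  have huniv : (Finset.univ : Finset (Fin n)) = insert L (Finset.Iio L) := by
    ext x
    simp only [Finset.mem_univ, Finset.mem_insert, Finset.mem_Iio, true_iff, Fin.lt_def]
    rcases eq_or_ne x L with h | h
    · exact Or.inl h
    · right
      have hx := x.isLt
      have hxL : (x : ℕ) ≠ (L : ℕ) := fun hc => h (Fin.ext hc)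
      have hLv : (L : ℕ) = n - 1 := rfl
      omega
  have hprod : ∏ i, α i = α L * ∏ j ∈ Finset.Iio L, α j := by
    rw [huniv, Finset.prod_insert (by simp)]
  set f : ℝ → ℝ := fun ε => (α L - ε / 2) * ∏ j ∈ Finset.Iio L, (α j - ε) with hf
  have hcont : Continuous f := by
    apply Continuous.mul
    · continuity
    · exact continuous_finset_prod _ fun j _ => by continuity
  have hf0 : f 0 = ∏ i, α i := by
    rw [hf, hprod]; simp
  have h1 : ∀ᶠ ε in 𝓝 (0:ℝ), (k - 1) / k ^ 2 < f ε :=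
    (hcont.continuousAt (x := 0)).eventually_const_lt (hf0 ▸ hc0)
  have h2 : ∀ᶠ ε in 𝓝 (0:ℝ), ∀ i, ε < α i :=
    Filter.eventually_all.2 fun i => eventually_lt_nhds (hα i)
  have h3 : ∀ᶠ ε in 𝓝[>] (0:ℝ), ((k - 1) / k ^ 2 < f ε ∧ ∀ i, ε < α i) ∧ 0 < ε :=
    (((h1.and h2).filter_mono nhdsWithin_le_nhds).and eventually_mem_nhdsWithin)
  obtain ⟨ε, ⟨⟨hεf, hεα⟩, hεpos⟩⟩ := h3.exists
  exact ⟨ε, hεpos, hεα, le_of_lt hεf⟩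


/-- If `k - 1 < αk²` (with `α = ∏αᵢ`) then there exists `ε > 0` such that the scaled `L¹`
matrix measure satisfies `μ_{1,D_ε}(J(x)) ≤ -ε/2 < 0` for all `x ∈ ℝⁿ₊`; hence the
biochemical control circuit is contractive on `ℝⁿ₊` with respect to the norm
`|z| = |D_ε z|₁`. -/
theorem stmt16 (n : ℕ) (hn : 2 ≤ n) (k : ℝ) (hk : 1 < k)
    (α : Fin n → ℝ) (hα : ∀ i, 0 < α i)
    (hcond : k - 1 < (∏ i, α i) * k ^ 2)
    (sol : ℝ → (Fin n → ℝ) → (Fin n → ℝ))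
    (hsol0 : ∀ a, (∀ i, 0 ≤ a i) → sol 0 a = a)
    (hode : ∀ a, (∀ i, 0 ≤ a i) → ∀ t : ℝ, 0 ≤ t →
      HasDerivAt (fun s => sol s a) (Ffield n (by omega) k α (sol t a)) t)
    (hinv : ∀ a, (∀ i, 0 ≤ a i) → ∀ t : ℝ, 0 ≤ t → ∀ i, 0 ≤ sol t a i) :
    ∃ ε : ℝ, 0 < ε ∧ (∀ i, ε < α i) ∧
      (∀ x : Fin n → ℝ, (∀ i, 0 ≤ x i) →
        mu1 (Dmat n α ε * Jmat n (by omega) k α x * (Dmat n α ε)⁻¹) ≤ -ε / 2) ∧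
      ∃ c : ℝ, 0 < c ∧
        ∀ t : ℝ, 0 ≤ t → ∀ a b : Fin n → ℝ, (∀ i, 0 ≤ a i) → (∀ i, 0 ≤ b i) →
          (∑ i, |(Dmat n α ε).mulVec (sol t a - sol t b) i|) ≤
            Real.exp (-c * t) * ∑ i, |(Dmat n α ε).mulVec (a - b) i| := by
  obtain ⟨ε, hε, hεα, hβbd⟩ := eps_exists n hn k hk α hα hcond
  have hn0 : 0 < n := by omega
  haveI : NeZero n := ⟨by omega⟩
  set L : Fin n := lastIdx n hn0 with hL
  set D := Dmat n α ε with hD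
  have hdpos := dpos α hεα
  have hβbd' : ∀ β : ℝ, 0 ≤ β → β ≤ (k - 1) / k ^ 2 →
      mu1 (D * Amat n hn0 α β * D⁻¹) ≤ -ε / 2 :=
    fun β h0 h1 => mu1_bound n hn α ε β hε hεα h0 (h1.trans hβbd)
  refine ⟨ε, hε, hεα, ?_, ε/2, by positivity, ?_⟩
  · intro x hx
    rw [Jmat_eq_Amat]
    apply hβbd'
    · exact div_nonneg (by linarith) (by positivity)
    · apply div_le_div_of_nonneg_left (by linarith) (by positivity)
      nlinarith [hx (lastIdx n hn0)]
  · intro t ht a b ha hb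
    set w : ℝ → Fin n → ℝ := fun s => D.mulVec (sol s a - sol s b) with hw
    set u : ℝ → ℝ := fun s => ∑ i, |w s i| with hu
    have husnn : ∀ s, 0 ≤ u s := fun s => Finset.sum_nonneg fun i _ => abs_nonneg _
    have hwc : ∀ z i, w z i = (∏ l ∈ Finset.Iio i, (α l - ε)) * (sol z a i - sol z b i) := by
      intro z i
      rw [hw]
      simp [hD, Dmat, Matrix.mulVec_diagonal]
    suffices h : u t ≤ Real.exp (-(ε/2) * t) * u 0 by
      have h0 : u 0 = ∑ i, |D.mulVec (a - b) i| := by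
        rw [hu]
        simp only [hw, hsol0 a ha, hsol0 b hb]
      rw [h0] at h
      exact h
    -- coordinate derivatives of sol
    have hsolder : ∀ (c₀ : Fin n → ℝ), (∀ i, 0 ≤ c₀ i) → ∀ s : ℝ, 0 ≤ s → ∀ i,
        HasDerivAt (fun z => sol z c₀ i) (Ffield n hn0 k α (sol s c₀) i) s := by
      intro c₀ hc₀ s hs i
      have h := (hode c₀ hc₀ s hs).hasFDerivAt
      have h2 := ((ContinuousLinearMap.proj i : (Fin n → ℝ) →L[ℝ] ℝ).hasFDerivAt).comp s h
      have h3 := h2.hasDerivAt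
      exact hasDerivAt_pi.1 (hode c₀ hc₀ s hs) i
    -- continuity of u on [0, t]
    have hcontOn : ContinuousOn u (Set.Icc 0 t) := by
      intro s hs
      apply ContinuousAt.continuousWithinAt
      have hca : ∀ i, ContinuousAt (fun z => sol z a i) s :=
        fun i => (hsolder a ha s hs.1 i).continuousAt
      have hcb : ∀ i, ContinuousAt (fun z => sol z b i) s :=
        fun i => (hsolder b hb s hs.1 i).continuousAt
      have hui : u = fun z => ∑ i, |(∏ l ∈ Finset.Iio i, (α l - ε)) * (sol z a i - sol z b i)| := by
        funext z
        rw [hu]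
        exact Finset.sum_congr rfl fun i _ => by rw [hwc z i]
      rw [hui]
      exact tendsto_finset_sum _ fun i _ =>
        ((((hca i).sub (hcb i)).const_mul _).abs :)
    -- the Dini derivative condition
    have hliminf : ∀ s ∈ Set.Ico (0:ℝ) t, ∀ r, (-(ε/2)) * u s < r →
        ∃ᶠ z in 𝓝[>] s, (z - s)⁻¹ * (u z - u s) < r := by
      intro s hs r hr
      obtain ⟨hs0, hst⟩ := hs
      set p := sol s a with hp
      set q := sol s b with hq
      have hpn : ∀ i, 0 ≤ p i := hinv a ha s hs0
      have hqn : ∀ i, 0 ≤ q i := hinv b hb s hs0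
      obtain ⟨β, hβ0, hβ1, hFeq⟩ := Ffield_sub n hn k hk α p q hpn hqn
      set A := Amat n hn0 α β with hA
      set B := D * A * D⁻¹ with hB
      have hmu : mu1 B ≤ -ε / 2 := hβbd' β hβ0 hβ1
      have hdetD : IsUnit D.det := by
        rw [hD, Dmat, Matrix.det_diagonal]
        exact isUnit_iff_ne_zero.2 (ne_of_gt (Finset.prod_pos fun i _ => hdpos i))
      have hDiD : ∀ v : Fin n → ℝ, D⁻¹.mulVec (D.mulVec v) = v := by
        intro v
        rw [Matrix.mulVec_mulVec, Matrix.nonsing_inv_mul _ hdetD, Matrix.one_mulVec]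
      have e1 : w s = D.mulVec (p - q) := rfl
      have e2 : B.mulVec (w s) = D.mulVec (A.mulVec (p - q)) := by
        rw [e1, hB, Matrix.mul_assoc, ← Matrix.mulVec_mulVec]
        congr 1
        rw [← Matrix.mulVec_mulVec, hDiD]
      have e3 : A.mulVec (p - q) = Ffield n hn0 k α p - Ffield n hn0 k α q := hFeq.symm
      have hBw : ∀ i, B.mulVec (w s) i =
          (∏ l ∈ Finset.Iio i, (α l - ε)) * ((Ffield n hn0 k α p - Ffield n hn0 k α q) i) := by
        intro i
        rw [e2, e3]
        simp [hD, Dmat, Matrix.mulVec_diagonal]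
      have hderiv : ∀ i, HasDerivAt (fun z => w z i) (B.mulVec (w s) i) s := by
        intro i
        have h1 := hsolder a ha s hs0 i
        have h2 := hsolder b hb s hs0 i
        have h3 := (h1.sub h2).const_mul (∏ l ∈ Finset.Iio i, (α l - ε))
        have hfn : (fun z => w z i) =
            fun z => (∏ l ∈ Finset.Iio i, (α l - ε)) * (sol z a i - sol z b i) :=
          funext fun z => hwc z i
        rw [hfn, hBw i]
        exact h3
      set M : ℝ := (∑ j, |B j j|) + 1 with hM
      have hM1 : ∀ j, |B j j| + 1 ≤ M := by
        intro j
        have h' : |B j j| ≤ ∑ j', |B j' j'| :=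
          Finset.single_le_sum (f := fun j' => |B j' j'|) (fun _ _ => abs_nonneg _)
            (Finset.mem_univ j)
        rw [hM]; linarith
      have hMpos : 0 < M := by
        rw [hM]
        have : (0:ℝ) ≤ ∑ j, |B j j| := Finset.sum_nonneg fun _ _ => abs_nonneg _
        linarith
      have hslopes : Filter.Tendsto
          (fun z => ∑ i, |(z - s)⁻¹ * (w z i - w s i) - B.mulVec (w s) i|)
          (𝓝[>] s) (𝓝 0) := by
        have hcoord : ∀ i, Filter.Tendsto (fun z => (z - s)⁻¹ * (w z i - w s i))
            (𝓝[>] s) (𝓝 (B.mulVec (w s) i)) := by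
          intro i
          have hsl := (hasDerivAt_iff_tendsto_slope.1 (hderiv i)).mono_left
            (nhdsWithin_mono s fun z hz => ne_of_gt hz)
          have : (fun z => (z - s)⁻¹ * (w z i - w s i)) = slope (fun z => w z i) s := by
            funext z
            rw [slope_def_field]
            ring
          rw [this]
          exact hsl
        have h0 : Filter.Tendsto
            (fun z => ∑ i, |(z - s)⁻¹ * (w z i - w s i) - B.mulVec (w s) i|)
            (𝓝[>] s) (𝓝 (∑ i : Fin n, |B.mulVec (w s) i - B.mulVec (w s) i|)) :=
          tendsto_finset_sum _ fun i _ => ((hcoord i).sub tendsto_const_nhds).abs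
        simpa using h0
      have hη : (0:ℝ) < r + (ε/2) * u s := by linarith
      have h1 : ∀ᶠ z in 𝓝[>] s,
          ∑ i, |(z - s)⁻¹ * (w z i - w s i) - B.mulVec (w s) i| < r + (ε/2) * u s :=
        hslopes.eventually_lt_const hη
      have h2 : ∀ᶠ z in 𝓝[>] s, z < s + 1/M :=
        Filter.Eventually.filter_mono nhdsWithin_le_nhds
          (eventually_lt_nhds (by linarith [one_div_pos.2 hMpos]))
      have h3 : ∀ᶠ z in 𝓝[>] s, s < z := eventually_mem_nhdsWithin
      apply Filter.Eventually.frequently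
      filter_upwards [h1, h2, h3] with z hz1 hz2 hz3
      have hhpos : 0 < z - s := by linarith
      have hhM : ∀ j, -1 ≤ (z - s) * B j j := by
        intro j
        have habs : |(z - s) * B j j| ≤ 1 := by
          rw [abs_mul, abs_of_pos hhpos]
          have hbj : |B j j| ≤ M - 1 := by have := hM1 j; linarith
          have hhle : z - s ≤ 1/M := by linarith
          have h4 : (z - s) * |B j j| ≤ (1/M) * (M - 1) :=
            mul_le_mul hhle hbj (abs_nonneg _) (le_of_lt (one_div_pos.2 hMpos))
          have h5 : (1/M) * (M - 1) ≤ 1 := by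
            rw [div_mul_eq_mul_div, div_le_one hMpos]
            linarith
          linarith
        linarith [neg_abs_le ((z - s) * B j j)]
      have step := sum_abs_step B (w s) hhpos.le hhM
      have tri : u z ≤ (∑ i, |w s i + (z - s) * B.mulVec (w s) i|) +
          ∑ i, |w z i - w s i - (z - s) * B.mulVec (w s) i| := by
        rw [hu, ← Finset.sum_add_distrib]
        apply Finset.sum_le_sum
        intro i _
        have hsplit : w z i = (w s i + (z - s) * B.mulVec (w s) i) +
            (w z i - w s i - (z - s) * B.mulVec (w s) i) := by ring
        conv_lhs => rw [hsplit]
        exact abs_add_le _ _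
      have e4 : ∑ i, |w z i - w s i - (z - s) * B.mulVec (w s) i| =
          (z - s) * ∑ i, |(z - s)⁻¹ * (w z i - w s i) - B.mulVec (w s) i| := by
        rw [Finset.mul_sum]
        apply Finset.sum_congr rfl
        intro i _
        have hne : z - s ≠ 0 := ne_of_gt hhpos
        have hrw : w z i - w s i - (z - s) * B.mulVec (w s) i
            = (z - s) * ((z - s)⁻¹ * (w z i - w s i) - B.mulVec (w s) i) := by
          field_simp
        rw [hrw, abs_mul, abs_of_pos hhpos]
      have hmu' : mu1 B * u s ≤ (-(ε/2)) * u s :=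
        mul_le_mul_of_nonneg_right (by linarith) (husnn s)
      have c1 : u z ≤ u s + (z - s) * (mu1 B * u s) +
          (z - s) * ∑ i, |(z - s)⁻¹ * (w z i - w s i) - B.mulVec (w s) i| := by
        rw [e4] at tri
        have : (1 + (z - s) * mu1 B) * u s = u s + (z - s) * (mu1 B * u s) := by ring
        linarith [step, tri]
      have c2 : (z - s) * (mu1 B * u s) ≤ (z - s) * ((-(ε/2)) * u s) :=
        mul_le_mul_of_nonneg_left hmu' hhpos.le
      have c3 : (z - s) * (∑ i, |(z - s)⁻¹ * (w z i - w s i) - B.mulVec (w s) i|) <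
          (z - s) * (r + (ε/2) * u s) :=
        mul_lt_mul_of_pos_left hz1 hhpos
      have c4 : u s + (z - s) * ((-(ε/2)) * u s) + (z - s) * (r + (ε/2) * u s) =
          u s + (z - s) * r := by ring
      have final : u z - u s < (z - s) * r := by linarith
      rw [inv_mul_lt_iff₀ hhpos]
      linarith
    have hg := le_gronwallBound_of_liminf_deriv_right_le (f := u)
      (f' := fun s => (-(ε/2)) * u s) (δ := u 0) (K := -(ε/2)) (ε := 0)
      (a := 0) (b := t) hcontOn hliminf le_rfl
      (fun x _ => by simp)
    have hgt := hg t (Set.mem_Icc.2 ⟨ht, le_rfl⟩)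
    rwa [sub_zero, gronwallBound_ε0, mul_comm] at hgt
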